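/- Let E be a separable complex Hilbert space, A ∈ B(H²_E(𝕋)), and Φ₁ ∈ L∞_{B(E)}(𝕋) with T_z* A − A T_z = T_{Φ₁}. Then for every integer n ≥ 1, (T_z*)ⁿ A − A T_zⁿ = T_{((zⁿ − z̄ⁿ)/(z − z̄)) Φ₁}, where (zⁿ − z̄ⁿ)/(z − z̄) = z̄^{n−1}(1 + z² + ⋯ + z^{2(n−1)}) is a scalar-valued trigonometric polynomial. -/

import Mathlib

open MeasureTheory Complex AddCircle
open scoped ENNReal Real

set_option synthInstance.maxHeartbeats 1000000
set_option linter.unusedSectionVars false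

noncomputable section

namespace PaperTHV

instance fact2pi : Fact (0 < 2 * Real.pi) := ⟨by positivity⟩

/-- The circle, as `ℝ / 2πℤ`. -/
abbrev 𝕋c := AddCircle (2 * Real.pi)

/-- The normalized Lebesgue (Haar) measure on the circle. -/
abbrev μc : Measure 𝕋c := haarAddCircle

/-- The `n`-th Fourier coefficient of a vector-valued function on the circle
(a universe-polymorphic version of `fourierCoeff`). -/
def vFourierCoeff {F : Type*} [NormedAddCommGroup F] [NormedSpace ℂ F]
    (f : 𝕋c → F) (n : ℤ) : F :=
  ∫ t : 𝕋c, fourier (-n) t • f t ∂μc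

variable (E : Type*) [NormedAddCommGroup E] [InnerProductSpace ℂ E] [CompleteSpace E]
  [SecondCountableTopology E]

instance : IsBoundedSMul (E →L[ℂ] E) E :=
  IsBoundedSMul.of_norm_smul_le fun r x => r.le_opNorm x

/-- `L²_E(𝕋)`, the Bochner space of square integrable `E`-valued functions. -/
abbrev L2v := Lp E 2 μc

variable {E}

theorem integrable_fourier_smul (f : L2v E) (n : ℤ) :
    Integrable (fun t : 𝕋c => fourier n t • (f : 𝕋c → E) t) μc := by
  have h1 : MemLp (f : 𝕋c → E) 1 μc :=
    (Lp.memLp f).mono_exponent (by norm_num)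
  have h2 : MemLp (fun t : 𝕋c => (fourier n t : ℂ)) ∞ μc :=
    memLp_top_of_bound ((fourier n).continuous.aestronglyMeasurable) 1
      (Filter.Eventually.of_forall fun x => by
        simp only [fourier_apply, Circle.norm_coe, le_refl])
  have h3 : MemLp ((fun t : 𝕋c => (fourier n t : ℂ)) • (f : 𝕋c → E)) 1 μc := h1.smul h2
  rw [memLp_one_iff_integrable] at h3
  exact h3.congr (Filter.Eventually.of_forall fun x => rfl)

theorem vFourierCoeff_lp_add (f g : L2v E) (n : ℤ) :
    vFourierCoeff (⇑(f + g)) n = vFourierCoeff (⇑f) n + vFourierCoeff (⇑g) n := by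
  unfold vFourierCoeff
  rw [← integral_add (integrable_fourier_smul f (-n)) (integrable_fourier_smul g (-n))]
  apply integral_congr_ae
  filter_upwards [Lp.coeFn_add f g] with x hx
  rw [hx]
  simp only [Pi.add_apply, smul_add]

theorem vFourierCoeff_lp_smul (c : ℂ) (f : L2v E) (n : ℤ) :
    vFourierCoeff (⇑(c • f)) n = c • vFourierCoeff (⇑f) n := by
  unfold vFourierCoeff
  rw [← integral_smul]
  apply integral_congr_ae
  filter_upwards [Lp.coeFn_smul c f] with x hx
  rw [hx]
  simp only [Pi.smul_apply]
  rw [smul_comm]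

theorem vFourierCoeff_lp_zero (n : ℤ) : vFourierCoeff (⇑(0 : L2v E)) n = 0 := by
  unfold vFourierCoeff
  have h : (fun t : 𝕋c => fourier (-n) t • (⇑(0 : L2v E)) t) =ᵐ[μc] (fun _ => (0 : E)) := by
    filter_upwards [Lp.coeFn_zero E 2 μc] with x hx
    simp [hx]
  rw [integral_congr_ae h, integral_zero]

variable (E) in
/-- The `E`-valued Hardy space `H²_E(𝕋)`: members of `L²_E(𝕋)` all of whose Fourier
coefficients of negative index vanish. -/
def HardyV : Submodule ℂ (L2v E) where
  carrier := {f | ∀ n : ℤ, n < 0 → vFourierCoeff (⇑f) n = 0}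
  add_mem' := by
    intro f g hf hg n hn
    rw [vFourierCoeff_lp_add, hf n hn, hg n hn, add_zero]
  zero_mem' := fun n _ => vFourierCoeff_lp_zero n
  smul_mem' := by
    intro c f hf n hn
    rw [vFourierCoeff_lp_smul, hf n hn, smul_zero]

theorem norm_vFourierCoeff_le (f : L2v E) (n : ℤ) : ‖vFourierCoeff (⇑f) n‖ ≤ ‖f‖ := by
  unfold vFourierCoeff
  have h1 : ‖∫ t, fourier (-n) t • (⇑f) t ∂μc‖ ≤ ∫ t, ‖fourier (-n) t • (⇑f) t‖ ∂μc :=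
    norm_integral_le_integral_norm _
  have h2 : (∫ t, ‖fourier (-n) t • (⇑f) t‖ ∂μc) = ∫ t, ‖(⇑f) t‖ ∂μc := by
    apply integral_congr_ae
    apply Filter.Eventually.of_forall
    intro x
    simp only [norm_smul, fourier_apply, Circle.norm_coe, one_mul]
  refine h1.trans (h2.le.trans ?_)
  have h3 : (∫ t, ‖(⇑f) t‖ ∂μc) = (eLpNorm (⇑f) 1 μc).toReal := by
    rw [integral_norm_eq_lintegral_enorm (Lp.aestronglyMeasurable f),
      eLpNorm_one_eq_lintegral_enorm]
  rw [h3, Lp.norm_def]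
  apply ENNReal.toReal_mono (Lp.eLpNorm_ne_top f)
  exact eLpNorm_le_eLpNorm_of_exponent_le (by norm_num) (Lp.aestronglyMeasurable f)

theorem continuous_fourierCoeff (n : ℤ) :
    Continuous fun f : L2v E => vFourierCoeff (⇑f) n := by
  have hL : LipschitzWith 1 (fun f : L2v E => vFourierCoeff (⇑f) n) := by
    apply LipschitzWith.of_dist_le_mul
    intro f g
    rw [dist_eq_norm, dist_eq_norm]
    have hsub : vFourierCoeff (⇑(f - g)) n = vFourierCoeff (⇑f) n - vFourierCoeff (⇑g) n := by
      have h1 : f - g = f + (-1 : ℂ) • g := by rw [neg_one_smul, sub_eq_add_neg]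
      rw [h1, vFourierCoeff_lp_add, vFourierCoeff_lp_smul, neg_one_smul, sub_eq_add_neg]
    rw [← hsub]
    simpa using norm_vFourierCoeff_le (f - g) n
  exact hL.continuous

theorem isClosed_HardyV : IsClosed ((HardyV E : Submodule ℂ (L2v E)) : Set (L2v E)) := by
  have h : ((HardyV E : Submodule ℂ (L2v E)) : Set (L2v E)) =
      ⋂ (n : ℤ) (_ : n < 0), ((fun f : L2v E => vFourierCoeff (⇑f) n) ⁻¹' {0}) := by
    ext f
    simp only [Set.mem_iInter, Set.mem_preimage, Set.mem_singleton_iff, SetLike.mem_coe]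
    exact ⟨fun hf n hn => hf n hn, fun hf n hn => hf n hn⟩
  rw [h]
  exact isClosed_iInter fun n => isClosed_iInter fun _ =>
    isClosed_singleton.preimage (continuous_fourierCoeff n)

instance : CompleteSpace (HardyV E) := (isClosed_HardyV (E := E)).completeSpace_coe

/-- Underlying function of the multiplication operator with operator-valued symbol. -/
def MopFunV (Φ : 𝕋c → (E →L[ℂ] E)) (hΦ : MemLp Φ ∞ μc) (f : L2v E) : L2v E :=
  ((Lp.memLp f).smul hΦ).toLp (Φ • ⇑f)

theorem MopFunV_coeFn (Φ : 𝕋c → (E →L[ℂ] E)) (hΦ : MemLp Φ ∞ μc) (f : L2v E) :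
    ⇑(MopFunV Φ hΦ f) =ᵐ[μc] Φ • ⇑f := MemLp.coeFn_toLp _

theorem MopFunV_add (Φ : 𝕋c → (E →L[ℂ] E)) (hΦ : MemLp Φ ∞ μc) (f g : L2v E) :
    MopFunV Φ hΦ (f + g) = MopFunV Φ hΦ f + MopFunV Φ hΦ g := by
  apply Lp.ext
  filter_upwards [MopFunV_coeFn Φ hΦ (f + g), MopFunV_coeFn Φ hΦ f, MopFunV_coeFn Φ hΦ g,
    Lp.coeFn_add f g, Lp.coeFn_add (MopFunV Φ hΦ f) (MopFunV Φ hΦ g)] with x h1 h2 h3 h4 h5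
  simp only [h1, h5, Pi.add_apply, h2, h3, Pi.smul_apply', h4, smul_add]

theorem MopFunV_smul (Φ : 𝕋c → (E →L[ℂ] E)) (hΦ : MemLp Φ ∞ μc) (c : ℂ) (f : L2v E) :
    MopFunV Φ hΦ (c • f) = c • MopFunV Φ hΦ f := by
  apply Lp.ext
  filter_upwards [MopFunV_coeFn Φ hΦ (c • f), MopFunV_coeFn Φ hΦ f,
    Lp.coeFn_smul c f, Lp.coeFn_smul c (MopFunV Φ hΦ f)] with x h1 h2 h3 h4
  simp only [h1, h4, Pi.smul_apply', Pi.smul_apply, h2, h3]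
  rw [smul_comm]

theorem MopFunV_norm (Φ : 𝕋c → (E →L[ℂ] E)) (hΦ : MemLp Φ ∞ μc) (f : L2v E) :
    ‖MopFunV Φ hΦ f‖ ≤ (eLpNorm Φ ∞ μc).toReal * ‖f‖ := by
  have hrfl : MopFunV Φ hΦ f = ((Lp.memLp f).smul hΦ).toLp (Φ • ⇑f) := rfl
  rw [hrfl, Lp.norm_toLp (Φ • ⇑f) ((Lp.memLp f).smul hΦ), Lp.norm_def]
  have hb : eLpNorm (Φ • ⇑f) 2 μc ≤ eLpNorm Φ ∞ μc * eLpNorm (⇑f) 2 μc :=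
    eLpNorm_smul_le_eLpNorm_top_mul_eLpNorm 2 (Lp.aestronglyMeasurable f) Φ
  have hfin : eLpNorm Φ ∞ μc * eLpNorm (⇑f) 2 μc ≠ ∞ :=
    ENNReal.mul_ne_top hΦ.eLpNorm_ne_top (Lp.eLpNorm_ne_top f)
  calc (eLpNorm (Φ • ⇑f) 2 μc).toReal
      ≤ (eLpNorm Φ ∞ μc * eLpNorm (⇑f) 2 μc).toReal := ENNReal.toReal_mono hfin hb
    _ = (eLpNorm Φ ∞ μc).toReal * (eLpNorm (⇑f) 2 μc).toReal := ENNReal.toReal_mul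

/-- The multiplication (Laurent) operator `M_Φ` on `L²_E(𝕋)` with operator-valued symbol
`Φ ∈ L∞_{B(E)}(𝕋)`. -/
def MopV (Φ : 𝕋c → (E →L[ℂ] E)) (hΦ : MemLp Φ ∞ μc) : L2v E →L[ℂ] L2v E :=
  LinearMap.mkContinuous
    { toFun := MopFunV Φ hΦ
      map_add' := MopFunV_add Φ hΦ
      map_smul' := MopFunV_smul Φ hΦ }
    (eLpNorm Φ ∞ μc).toReal
    (fun f => MopFunV_norm Φ hΦ f)

/-- The conjugation operator `J : L²_E(𝕋) → L²_E(𝕋)`, `(Jf)(z) = f(z̄)`. -/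
def JopV : L2v E →L[ℂ] L2v E :=
  LinearMap.mkContinuous
    { toFun := fun f =>
        Lp.compMeasurePreserving (fun x : 𝕋c => -x) (Measure.measurePreserving_neg μc) f
      map_add' := by
        intro f g
        exact map_add (Lp.compMeasurePreserving _ (Measure.measurePreserving_neg μc)) f g
      map_smul' := by
        intro c f
        apply Lp.ext
        simp only [RingHom.id_apply]
        have hmp := Measure.measurePreserving_neg (μ := μc)
        have h1 := Lp.coeFn_compMeasurePreserving (μ := μc) (c • f) hmp
        have h2 := Lp.coeFn_compMeasurePreserving (μ := μc) f hmp
        have h3 : ⇑(c • f) ∘ (fun x : 𝕋c => -x) =ᵐ[μc] (c • ⇑f) ∘ (fun x : 𝕋c => -x) :=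
          hmp.quasiMeasurePreserving.ae_eq_comp (Lp.coeFn_smul c f)
        have h4 : (c • ⇑f) ∘ (fun x : 𝕋c => -x) = c • (⇑f ∘ fun x : 𝕋c => -x) := rfl
        have h5 : c • (⇑f ∘ fun x : 𝕋c => -x) =ᵐ[μc]
            c • ⇑(Lp.compMeasurePreserving (fun x : 𝕋c => -x) hmp f) :=
          h2.symm.const_smul c
        exact ((h1.trans h3).trans ((h4 ▸ h5 : _))).trans (Lp.coeFn_smul c _).symm }
    1
    (by
      intro f
      simp only [LinearMap.coe_mk, AddHom.coe_mk, one_mul]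
      exact le_of_eq (Lp.norm_compMeasurePreserving f _))

/-- The Toeplitz operator `T_Φ = P_{H²_E} M_Φ |_{H²_E}`. -/
def ToepV (Φ : 𝕋c → (E →L[ℂ] E)) (hΦ : MemLp Φ ∞ μc) : HardyV E →L[ℂ] HardyV E :=
  (HardyV E).orthogonalProjectionOnto.comp ((MopV Φ hΦ).comp (HardyV E).subtypeL)

/-- The Hankel operator `H_Φ = P_{H²_E} M_Φ J |_{H²_E}`. -/
def HankV (Φ : 𝕋c → (E →L[ℂ] E)) (hΦ : MemLp Φ ∞ μc) : HardyV E →L[ℂ] HardyV E :=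
  (HardyV E).orthogonalProjectionOnto.comp ((MopV Φ hΦ).comp (JopV.comp (HardyV E).subtypeL))

variable (E) in
/-- The symbol `z ⬝ I_E`. -/
def zSym : 𝕋c → (E →L[ℂ] E) := fun x => (fourier 1 x : ℂ) • (1 : E →L[ℂ] E)

theorem zSym_memℒp : MemLp (zSym E) ∞ μc := by
  have hc : Continuous (zSym E) := by
    have h1 : Continuous fun x : 𝕋c => (fourier 1 x : ℂ) := (fourier 1).continuous
    exact h1.smul continuous_const
  refine memLp_top_of_bound hc.aestronglyMeasurable 1
    (Filter.Eventually.of_forall fun x => ?_)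
  rw [zSym, norm_smul]
  simp only [fourier_apply, Circle.norm_coe, one_mul]
  exact ContinuousLinearMap.norm_id_le

variable (E) in
/-- The (vector-valued) unilateral shift `T_z`. -/
def TzV : HardyV E →L[ℂ] HardyV E := ToepV (zSym E) zSym_memℒp

variable (E) in
/-- `T_z^*`, the adjoint of the unilateral shift. -/
def TzStarV : HardyV E →L[ℂ] HardyV E := ContinuousLinearMap.adjoint (TzV E)

variable (E) in
/-- `A` is a Toeplitz + Hankel operator: `A = T_Φ + H_Ψ` for some
`Φ, Ψ ∈ L∞_{B(E)}(𝕋)`. -/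
def IsToepPlusHankV (A : HardyV E →L[ℂ] HardyV E) : Prop :=
  ∃ (Φ Ψ : 𝕋c → (E →L[ℂ] E)) (hΦ : MemLp Φ ∞ μc) (hΨ : MemLp Ψ ∞ μc),
    A = ToepV Φ hΦ + HankV Ψ hΨ


theorem dirichlet_smul_memℒp (n : ℕ) {Φ : 𝕋c → (E →L[ℂ] E)} (hΦ : MemLp Φ ∞ μc) :
    MemLp (fun x : 𝕋c =>
      (∑ k ∈ Finset.range n, (fourier (2 * (k : ℤ) - ((n : ℤ) - 1)) x : ℂ)) • Φ x) ∞ μc := by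
  have hc : Continuous fun x : 𝕋c =>
      (∑ k ∈ Finset.range n, (fourier (2 * (k : ℤ) - ((n : ℤ) - 1)) x : ℂ)) :=
    continuous_finset_sum _ fun k _ => (fourier _).continuous
  have hb : MemLp (fun x : 𝕋c =>
      (∑ k ∈ Finset.range n, (fourier (2 * (k : ℤ) - ((n : ℤ) - 1)) x : ℂ))) ∞ μc := by
    refine memLp_top_of_bound hc.aestronglyMeasurable n
      (Filter.Eventually.of_forall fun x => ?_)
    calc ‖∑ k ∈ Finset.range n, (fourier (2 * (k : ℤ) - ((n : ℤ) - 1)) x : ℂ)‖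
        ≤ ∑ k ∈ Finset.range n, ‖(fourier (2 * (k : ℤ) - ((n : ℤ) - 1)) x : ℂ)‖ :=
          norm_sum_le _ _
      _ = n := by
          rw [Finset.sum_congr rfl fun k _ => ?_, Finset.sum_const, Finset.card_range,
            nsmul_eq_mul, mul_one]
          simp only [fourier_apply, Circle.norm_coe]
  have h2 : MemLp ((fun x : 𝕋c =>
        (∑ k ∈ Finset.range n, (fourier (2 * (k : ℤ) - ((n : ℤ) - 1)) x : ℂ))) • Φ) ∞ μc :=
    hΦ.smul hb
  have h3 : ((fun x : 𝕋c =>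
        (∑ k ∈ Finset.range n, (fourier (2 * (k : ℤ) - ((n : ℤ) - 1)) x : ℂ))) • Φ) =
      fun x : 𝕋c =>
        (∑ k ∈ Finset.range n, (fourier (2 * (k : ℤ) - ((n : ℤ) - 1)) x : ℂ)) • Φ x := by
    funext x
    simp only [Pi.smul_apply']
  exact h3 ▸ h2

/-! ### Auxiliary lemmas -/

theorem fSmul_memℒp (m : ℤ) {Φ : 𝕋c → (E →L[ℂ] E)} (hΦ : MemLp Φ ∞ μc) :
    MemLp (fun x : 𝕋c => (fourier m x : ℂ) • Φ x) ∞ μc := by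
  have hb : MemLp (fun x : 𝕋c => (fourier m x : ℂ)) ∞ μc :=
    memLp_top_of_bound ((fourier m).continuous.aestronglyMeasurable) 1
      (Filter.Eventually.of_forall fun x => by
        simp only [fourier_apply, Circle.norm_coe, le_refl])
  have h2 : MemLp ((fun x : 𝕋c => (fourier m x : ℂ)) • Φ) ∞ μc := hΦ.smul hb
  have h3 : ((fun x : 𝕋c => (fourier m x : ℂ)) • Φ) =
      fun x : 𝕋c => (fourier m x : ℂ) • Φ x := by
    funext x; simp only [Pi.smul_apply']
  exact h3 ▸ h2

theorem MopV_coeFn' {Φ : 𝕋c → (E →L[ℂ] E)} (hΦ : MemLp Φ ∞ μc) (f : L2v E) :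
    ⇑(MopV Φ hΦ f) =ᵐ[μc] fun x => Φ x ((f : 𝕋c → E) x) := by
  have h : ⇑(MopV Φ hΦ f) =ᵐ[μc] Φ • ⇑f := MopFunV_coeFn Φ hΦ f
  filter_upwards [h] with x hx
  rw [hx, Pi.smul_apply', ContinuousLinearMap.smul_def]

variable (E) in
/-- The symbol `z̄ ⬝ I_E`. -/
def zbSym : 𝕋c → (E →L[ℂ] E) := fun x => (fourier (-1) x : ℂ) • (1 : E →L[ℂ] E)

theorem zbSym_memℒp : MemLp (zbSym E) ∞ μc := by
  have hc : Continuous (zbSym E) := by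
    have h1 : Continuous fun x : 𝕋c => (fourier (-1) x : ℂ) := (fourier (-1)).continuous
    exact h1.smul continuous_const
  refine memLp_top_of_bound hc.aestronglyMeasurable 1
    (Filter.Eventually.of_forall fun x => ?_)
  rw [zbSym, norm_smul]
  simp only [fourier_apply, Circle.norm_coe, one_mul]
  exact ContinuousLinearMap.norm_id_le

theorem Mz_mem_hardy (f : L2v E) (hf : f ∈ HardyV E) :
    MopV (zSym E) zSym_memℒp f ∈ HardyV E := by
  intro n hn
  have h2 : vFourierCoeff (⇑(MopV (zSym E) zSym_memℒp f)) n = vFourierCoeff (⇑f) (n - 1) := by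
    unfold vFourierCoeff
    apply integral_congr_ae
    filter_upwards [MopV_coeFn' zSym_memℒp f] with x hx
    rw [hx]
    simp only [zSym, ContinuousLinearMap.smul_apply, ContinuousLinearMap.one_apply]
    rw [smul_smul]
    congr 1
    rw [show -(n - 1) = -n + 1 by ring, fourier_add]
  rw [h2]
  exact hf (n - 1) (by omega)

theorem inner_zb_z (x y : L2v E) :
    inner ℂ (MopV (zbSym E) zbSym_memℒp x) y =
      inner ℂ x (MopV (zSym E) zSym_memℒp y) := by
  rw [L2.inner_def, L2.inner_def]
  apply integral_congr_ae
  filter_upwards [MopV_coeFn' zbSym_memℒp x, MopV_coeFn' zSym_memℒp y] with t h1 h2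
  rw [h1, h2]
  simp only [zbSym, zSym, ContinuousLinearMap.smul_apply, ContinuousLinearMap.one_apply]
  rw [inner_smul_left, inner_smul_right]
  congr 1
  rw [show ((-1 : ℤ)) = -(1 : ℤ) from rfl, fourier_neg, Complex.conj_conj]

theorem Mzb_mem_orthogonal {w : L2v E} (hw : w ∈ (HardyV E)ᗮ) :
    MopV (zbSym E) zbSym_memℒp w ∈ (HardyV E)ᗮ := by
  rw [Submodule.mem_orthogonal]
  intro u hu
  have h0 : inner ℂ (MopV (zSym E) zSym_memℒp u) w = 0 :=
    (Submodule.mem_orthogonal _ _).mp hw _ (Mz_mem_hardy u hu)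
  calc inner ℂ u (MopV (zbSym E) zbSym_memℒp w)
      = starRingEnd ℂ (inner ℂ (MopV (zbSym E) zbSym_memℒp w) u) := (inner_conj_symm _ _).symm
    _ = starRingEnd ℂ (inner ℂ w (MopV (zSym E) zSym_memℒp u)) := by rw [inner_zb_z]
    _ = inner ℂ (MopV (zSym E) zSym_memℒp u) w := inner_conj_symm _ _
    _ = 0 := h0

theorem TzStarV_eq : TzStarV E = ToepV (zbSym E) zbSym_memℒp := by
  have key : ToepV (zbSym E) zbSym_memℒp = ContinuousLinearMap.adjoint (TzV E) := by
    rw [ContinuousLinearMap.eq_adjoint_iff]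
    intro f g
    have l1 : ToepV (zbSym E) zbSym_memℒp f =
        (HardyV E).orthogonalProjectionOnto (MopV (zbSym E) zbSym_memℒp ↑f) := rfl
    have l2 : TzV E g =
        (HardyV E).orthogonalProjectionOnto (MopV (zSym E) zSym_memℒp ↑g) := rfl
    calc inner ℂ (ToepV (zbSym E) zbSym_memℒp f) g
        = inner ℂ (MopV (zbSym E) zbSym_memℒp (↑f : L2v E)) (↑g : L2v E) := by
          rw [l1]; exact Submodule.inner_orthogonalProjectionOnto_eq_of_mem_right (K := HardyV E) g _
      _ = inner ℂ (↑f : L2v E) (MopV (zSym E) zSym_memℒp (↑g : L2v E)) := inner_zb_z _ _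
      _ = inner ℂ f (TzV E g) := by
          rw [l2]; exact (Submodule.inner_orthogonalProjectionOnto_eq_of_mem_left (K := HardyV E) f _).symm
  rw [key]
  rfl

theorem TzStar_comp_Toep {Φ : 𝕋c → (E →L[ℂ] E)} (hΦ : MemLp Φ ∞ μc) :
    (TzStarV E).comp (ToepV Φ hΦ) =
      ToepV (fun x : 𝕋c => (fourier (-1) x : ℂ) • Φ x) (fSmul_memℒp (-1) hΦ) := by
  rw [TzStarV_eq]
  refine ContinuousLinearMap.ext fun f => ?_
  show (HardyV E).orthogonalProjectionOnto (MopV (zbSym E) zbSym_memℒp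
      ↑((HardyV E).orthogonalProjectionOnto (MopV Φ hΦ ↑f))) =
    (HardyV E).orthogonalProjectionOnto
      (MopV (fun x : 𝕋c => (fourier (-1) x : ℂ) • Φ x) (fSmul_memℒp (-1) hΦ) ↑f)
  set h := MopV Φ hΦ (↑f : L2v E) with hh
  have key : MopV (zbSym E) zbSym_memℒp (↑((HardyV E).orthogonalProjectionOnto h) : L2v E) =
      MopV (zbSym E) zbSym_memℒp h -
        MopV (zbSym E) zbSym_memℒp (h - ↑((HardyV E).orthogonalProjectionOnto h)) := by
    rw [← map_sub]
    congr 1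
    abel
  have hMeq : MopV (zbSym E) zbSym_memℒp h =
      MopV (fun x : 𝕋c => (fourier (-1) x : ℂ) • Φ x) (fSmul_memℒp (-1) hΦ) ↑f := by
    apply Lp.ext
    filter_upwards [MopV_coeFn' zbSym_memℒp h, MopV_coeFn' hΦ (↑f : L2v E),
      MopV_coeFn' (fSmul_memℒp (-1) hΦ) (↑f : L2v E)] with x h1 h2 h3
    rw [h1, h2, h3]
    simp only [zbSym, ContinuousLinearMap.smul_apply, ContinuousLinearMap.one_apply]
  rw [key, map_sub,
    Submodule.orthogonalProjectionOnto_apply_of_mem_orthogonal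
      (Mzb_mem_orthogonal (show h - ↑((HardyV E).orthogonalProjectionOnto h) ∈ (HardyV E)ᗮ by
        rw [← Submodule.starProjection_apply]; exact Submodule.sub_starProjection_mem_orthogonal h)),
    sub_zero, hMeq]

set_option maxHeartbeats 1000000 in
theorem Toep_comp_Tz {Φ : 𝕋c → (E →L[ℂ] E)} (hΦ : MemLp Φ ∞ μc) :
    (ToepV Φ hΦ).comp (TzV E) =
      ToepV (fun x : 𝕋c => (fourier (1 : ℤ) x : ℂ) • Φ x) (fSmul_memℒp 1 hΦ) := by
  refine ContinuousLinearMap.ext fun f => ?_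
  show (HardyV E).orthogonalProjectionOnto (MopV Φ hΦ
      ↑((HardyV E).orthogonalProjectionOnto (MopV (zSym E) zSym_memℒp ↑f))) =
    (HardyV E).orthogonalProjectionOnto
      (MopV (fun x : 𝕋c => (fourier (1 : ℤ) x : ℂ) • Φ x) (fSmul_memℒp 1 hΦ) ↑f)
  have hz : (↑((HardyV E).orthogonalProjectionOnto (MopV (zSym E) zSym_memℒp ↑f)) : L2v E) =
      MopV (zSym E) zSym_memℒp ↑f :=
    by rw [← Submodule.starProjection_apply]; exact Submodule.starProjection_eq_self_iff.mpr (Mz_mem_hardy (E := E) (↑f : L2v E) f.2)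
  rw [hz]
  congr 1
  apply Lp.ext
  filter_upwards [MopV_coeFn' hΦ (MopV (zSym E) zSym_memℒp (↑f : L2v E)),
    MopV_coeFn' zSym_memℒp (↑f : L2v E),
    MopV_coeFn' (fSmul_memℒp 1 hΦ) (↑f : L2v E)] with x h1 h2 h3
  rw [h1, h2, h3]
  simp only [zSym, ContinuousLinearMap.smul_apply, ContinuousLinearMap.one_apply, ContinuousLinearMap.map_smul]

theorem ToepV_congr {Φ Ψ : 𝕋c → (E →L[ℂ] E)} (hΦ : MemLp Φ ∞ μc) (hΨ : MemLp Ψ ∞ μc)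
    (h : Φ = Ψ) : ToepV Φ hΦ = ToepV Ψ hΨ := by subst h; rfl

theorem Toep_comp_Tz_pow {Φ : 𝕋c → (E →L[ℂ] E)} (hΦ : MemLp Φ ∞ μc) (m : ℕ) :
    (ToepV Φ hΦ).comp ((TzV E) ^ m) =
      ToepV (fun x : 𝕋c => (fourier (m : ℤ) x : ℂ) • Φ x) (fSmul_memℒp m hΦ) := by
  induction m with
  | zero =>
    rw [pow_zero]
    have : (ToepV Φ hΦ).comp (1 : HardyV E →L[ℂ] HardyV E) = ToepV Φ hΦ := rfl
    rw [this]
    apply ToepV_congr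
    funext x
    simp
  | succ m ih =>
    rw [pow_succ, ContinuousLinearMap.mul_def ((TzV E) ^ m) (TzV E),
      show (ToepV Φ hΦ).comp (((TzV E) ^ m).comp (TzV E)) =
        ((ToepV Φ hΦ).comp ((TzV E) ^ m)).comp (TzV E) from rfl,
      ih, Toep_comp_Tz]
    apply ToepV_congr
    funext x
    rw [smul_smul]
    congr 1
    rw [← fourier_add]
    congr 1
    push_cast
    ring_nf

theorem ToepV_add {Φ Ψ : 𝕋c → (E →L[ℂ] E)} (hΦ : MemLp Φ ∞ μc) (hΨ : MemLp Ψ ∞ μc)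
    (h' : MemLp (fun x : 𝕋c => Φ x + Ψ x) ∞ μc) :
    ToepV (fun x : 𝕋c => Φ x + Ψ x) h' = ToepV Φ hΦ + ToepV Ψ hΨ := by
  refine ContinuousLinearMap.ext fun f => ?_
  show (HardyV E).orthogonalProjectionOnto (MopV (fun x : 𝕋c => Φ x + Ψ x) h' ↑f) =
    (HardyV E).orthogonalProjectionOnto (MopV Φ hΦ ↑f) +
      (HardyV E).orthogonalProjectionOnto (MopV Ψ hΨ ↑f)
  rw [← map_add]
  have hM : MopV (fun x : 𝕋c => Φ x + Ψ x) h' ↑f = MopV Φ hΦ ↑f + MopV Ψ hΨ ↑f := by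
    apply Lp.ext
    filter_upwards [MopV_coeFn' h' (↑f : L2v E), MopV_coeFn' hΦ (↑f : L2v E),
      MopV_coeFn' hΨ (↑f : L2v E), Lp.coeFn_add (MopV Φ hΦ ↑f) (MopV Ψ hΨ ↑f)]
      with x h1 h2 h3 h4
    rw [h1, h4, Pi.add_apply, h2, h3, ContinuousLinearMap.add_apply]
  rw [hM]

/-- **Theorem.** If `T_z* A - A T_z = T_{Φ₁}`, then for every `n ≥ 1`,
`T_z*ⁿ A - A T_zⁿ = T_{((zⁿ - z̄ⁿ)/(z - z̄)) Φ₁}`, where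
`(zⁿ - z̄ⁿ)/(z - z̄) = ∑_{k=0}^{n-1} z^{2k - (n-1)}`. -/
theorem iterated_toeplitz_identity (A : HardyV E →L[ℂ] HardyV E)
    (Φ₁ : 𝕋c → (E →L[ℂ] E)) (hΦ₁ : MemLp Φ₁ ∞ μc)
    (h : (TzStarV E).comp A - A.comp (TzV E) = ToepV Φ₁ hΦ₁) :
    ∀ n : ℕ, 1 ≤ n →
      ((TzStarV E) ^ n).comp A - A.comp ((TzV E) ^ n) =
        ToepV (fun x : 𝕋c =>
            (∑ k ∈ Finset.range n, (fourier (2 * (k : ℤ) - ((n : ℤ) - 1)) x : ℂ)) • Φ₁ x)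
          (dirichlet_smul_memℒp n hΦ₁) := by
  intro n hn
  induction n, hn using Nat.le_induction with
  | base =>
    rw [pow_one, pow_one, h]
    apply ToepV_congr
    funext x
    simp [Finset.sum_range_one]
  | succ n hn1 IH =>
    have key : ((TzStarV E) ^ (n + 1)).comp A - A.comp ((TzV E) ^ (n + 1)) =
        (TzStarV E).comp (((TzStarV E) ^ n).comp A - A.comp ((TzV E) ^ n)) +
          ((TzStarV E).comp A - A.comp (TzV E)).comp ((TzV E) ^ n) := by
      rw [pow_succ' (TzStarV E) n, pow_succ' (TzV E) n]
      simp only [← ContinuousLinearMap.mul_def]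
      simp only [mul_sub, sub_mul, mul_assoc]
      abel
    have hfun : (fun x : 𝕋c =>
        (∑ k ∈ Finset.range (n + 1),
          (fourier (2 * (k : ℤ) - (((n : ℕ) + 1 : ℕ) - 1 : ℤ)) x : ℂ)) • Φ₁ x) =
        fun x : 𝕋c =>
          (fourier (-1) x : ℂ) •
            ((∑ k ∈ Finset.range n, (fourier (2 * (k : ℤ) - ((n : ℤ) - 1)) x : ℂ)) • Φ₁ x) +
          (fourier (n : ℤ) x : ℂ) • Φ₁ x := by
      funext x
      rw [Finset.sum_range_succ, add_smul, smul_smul, Finset.mul_sum]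
      congr 1
      · congr 1
        apply Finset.sum_congr rfl
        intro k _
        rw [← fourier_add]
        congr 1
        push_cast
        ring_nf
      · congr 2
        push_cast
        ring_nf
    have hsum : MemLp (fun x : 𝕋c =>
        (fourier (-1) x : ℂ) •
          ((∑ k ∈ Finset.range n, (fourier (2 * (k : ℤ) - ((n : ℤ) - 1)) x : ℂ)) • Φ₁ x) +
        (fourier (n : ℤ) x : ℂ) • Φ₁ x) ∞ μc := by
      rw [← hfun]
      exact dirichlet_smul_memℒp (n + 1) hΦ₁
    rw [key, IH, h, TzStar_comp_Toep, Toep_comp_Tz_pow,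
      ← ToepV_add (fSmul_memℒp (-1) (dirichlet_smul_memℒp n hΦ₁))
        (fSmul_memℒp (n : ℤ) hΦ₁) hsum]
    exact ToepV_congr hsum (dirichlet_smul_memℒp (n + 1) hΦ₁) hfun.symm

end PaperTHV
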